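/- For each λ ∈ (1,2) and each integer k ≥ 2, there exists P < 0 such that T₊(P) + (2k-1)·T₋(P) = 2π. -/

import Mathlib

open Real MeasureTheory Set

lemma stmt15_int_sqrt : IntegrableOn (fun s : ℝ => 1 / Real.sqrt s) (Set.Ioo 0 1) := by
  have h1 : IntegrableOn (fun s : ℝ => s ^ (-(1/2) : ℝ)) (Set.Ioo (0:ℝ) 1) := by
    have := intervalIntegral.intervalIntegrable_rpow' (a := 0) (b := 1) (r := -(1/2)) (by norm_num)
    rw [intervalIntegrable_iff_integrableOn_Ioc_of_le zero_le_one] at this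
    exact this.congr_set_ae Ioo_ae_eq_Ioc
  refine h1.congr_fun ?_ measurableSet_Ioo
  intro s hs
  show s ^ (-(1/2) : ℝ) = 1 / Real.sqrt s
  rw [Real.rpow_neg hs.1.le, ← Real.sqrt_eq_rpow, one_div]

lemma stmt15_int_sqrt' : IntegrableOn (fun s : ℝ => 1 / Real.sqrt (1 - s)) (Set.Ioo 0 1) := by
  have h := (intervalIntegral.intervalIntegrable_rpow' (a := 0) (b := 1) (r := -(1/2))
      (by norm_num)).comp_sub_left 1
  simp only [sub_zero, sub_self] at h
  have h2 := h.symm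
  rw [intervalIntegrable_iff_integrableOn_Ioc_of_le zero_le_one] at h2
  refine (h2.congr_set_ae Ioo_ae_eq_Ioc).congr_fun ?_ measurableSet_Ioo
  intro s hs
  show (1 - s) ^ (-(1/2) : ℝ) = 1 / Real.sqrt (1 - s)
  rw [Real.rpow_neg (by linarith [hs.2]), ← Real.sqrt_eq_rpow, one_div]

lemma stmt15_w_int : IntegrableOn (fun s : ℝ => 1 / Real.sqrt (s * (1 - s))) (Set.Ioo 0 1) := by
  have hg : IntegrableOn (fun s : ℝ => Real.sqrt 2 * (1 / Real.sqrt s)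
      + Real.sqrt 2 * (1 / Real.sqrt (1 - s))) (Set.Ioo 0 1) :=
    (stmt15_int_sqrt.const_mul _).add (stmt15_int_sqrt'.const_mul _)
  refine hg.integrable.mono' ?_ ?_
  · refine ContinuousOn.aestronglyMeasurable ?_ measurableSet_Ioo
    intro s hs
    have hpos : 0 < s * (1 - s) := mul_pos hs.1 (by linarith [hs.2])
    have h1 : ContinuousAt (fun t : ℝ => Real.sqrt (t * (1 - t))) s :=
      Continuous.continuousAt (by fun_prop)
    exact (ContinuousAt.div continuousAt_const h1 (Real.sqrt_pos.2 hpos).ne').continuousWithinAt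
  · filter_upwards [ae_restrict_mem measurableSet_Ioo] with s hs
    obtain ⟨h0, h1'⟩ := hs
    have hpos : 0 < s * (1 - s) := mul_pos h0 (by linarith)
    rw [Real.norm_eq_abs, abs_of_nonneg (by positivity)]
    have key : ∀ u v : ℝ, 0 < u → 0 < v → (1:ℝ)/2 ≤ v →
        1 / Real.sqrt (u * v) ≤ Real.sqrt 2 * (1 / Real.sqrt u) := by
      intro u v hu hv hv2
      have hle : Real.sqrt (u / 2) ≤ Real.sqrt (u * v) := by
        apply Real.sqrt_le_sqrt; nlinarith
      have hs2 : 0 < Real.sqrt (u / 2) := Real.sqrt_pos.2 (by positivity)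
      calc 1 / Real.sqrt (u * v) ≤ 1 / Real.sqrt (u / 2) := one_div_le_one_div_of_le hs2 hle
        _ = Real.sqrt 2 * (1 / Real.sqrt u) := by
            rw [Real.sqrt_div hu.le, one_div_div, div_eq_mul_one_div]
    rcases le_total s (1/2) with hc | hc
    · have := key s (1 - s) h0 (by linarith) (by linarith)
      have h2 : 0 ≤ Real.sqrt 2 * (1 / Real.sqrt (1 - s)) := by positivity
      linarith
    · have := key (1 - s) s (by linarith) h0 hc
      rw [mul_comm (1 - s) s] at this
      have h2 : 0 ≤ Real.sqrt 2 * (1 / Real.sqrt s) := by positivity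
      linarith

lemma stmt15_w_val : ∫ s in Set.Ioo (0:ℝ) 1, 1 / Real.sqrt (s * (1 - s)) = π := by
  have hint : IntervalIntegrable (fun s : ℝ => 1 / Real.sqrt (s * (1 - s))) volume 0 1 := by
    rw [intervalIntegrable_iff_integrableOn_Ioc_of_le zero_le_one]
    exact stmt15_w_int.congr_set_ae Ioo_ae_eq_Ioc.symm
  have hderiv : ∀ s ∈ Set.Ioo (0:ℝ) 1,
      HasDerivAt (fun t : ℝ => Real.arcsin (2 * t - 1)) (1 / Real.sqrt (s * (1 - s))) s := by
    intro s hs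
    have hf : HasDerivAt (fun t : ℝ => 2 * t - 1) 2 s := by
      simpa using ((hasDerivAt_id s).const_mul 2).sub_const 1
    have hne1 : (2*s-1) ≠ -1 := by intro h; nlinarith [hs.1]
    have hne2 : (2*s-1) ≠ 1 := by intro h; nlinarith [hs.2]
    have h : HasDerivAt (fun t : ℝ => Real.arcsin (2 * t - 1))
        (1 / Real.sqrt (1 - (2*s-1)^2) * 2) s := by
      have h' := (Real.hasDerivAt_arcsin hne1 hne2).comp s hf
      exact h'
    convert h using 1
    have h4 : 1 - (2 * s - 1) ^ 2 = 2 ^ 2 * (s * (1 - s)) := by ring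
    have hx : 0 < Real.sqrt (s * (1 - s)) :=
      Real.sqrt_pos.2 (mul_pos hs.1 (by linarith [hs.2]))
    conv_rhs => rw [h4, Real.sqrt_mul (by norm_num : (0:ℝ) ≤ 2^2),
      Real.sqrt_sq (by norm_num : (0:ℝ) ≤ 2)]
    field_simp
  have hcont : Continuous (fun t : ℝ => Real.arcsin (2 * t - 1)) :=
    Real.continuous_arcsin.comp (by fun_prop)
  have h0 : Filter.Tendsto (fun t : ℝ => Real.arcsin (2 * t - 1)) (nhdsWithin 0 (Set.Ioi 0))
      (nhds (-(π/2))) := by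
    have := hcont.tendsto 0
    simp only [mul_zero, zero_sub, Real.arcsin_neg_one] at this
    exact this.mono_left nhdsWithin_le_nhds
  have h1 : Filter.Tendsto (fun t : ℝ => Real.arcsin (2 * t - 1)) (nhdsWithin 1 (Set.Iio 1))
      (nhds (π/2)) := by
    have := hcont.tendsto 1
    norm_num [Real.arcsin_one] at this
    exact this.mono_left nhdsWithin_le_nhds
  have key := intervalIntegral.integral_eq_sub_of_hasDerivAt_of_tendsto zero_lt_one hderiv hint h0 h1
  rw [intervalIntegral.integral_of_le zero_le_one, integral_Ioc_eq_integral_Ioo] at key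
  rw [key]; ring

lemma stmt15_q_int : IntegrableOn (fun s : ℝ => 1 / Real.sqrt (1 - s ^ 2)) (Set.Ioo 0 1) := by
  refine stmt15_w_int.integrable.mono' ?_ ?_
  · refine ContinuousOn.aestronglyMeasurable ?_ measurableSet_Ioo
    intro s hs
    have hpos : (0:ℝ) < 1 - s ^ 2 := by nlinarith [hs.1, hs.2]
    have h1 : ContinuousAt (fun t : ℝ => Real.sqrt (1 - t ^ 2)) s :=
      Continuous.continuousAt (by fun_prop)
    exact (ContinuousAt.div continuousAt_const h1 (Real.sqrt_pos.2 hpos).ne').continuousWithinAt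
  · filter_upwards [ae_restrict_mem measurableSet_Ioo] with s hs
    obtain ⟨h0, h1'⟩ := hs
    have hpos : (0:ℝ) < 1 - s ^ 2 := by nlinarith
    rw [Real.norm_eq_abs, abs_of_nonneg (by positivity)]
    apply one_div_le_one_div_of_le (Real.sqrt_pos.2 (mul_pos h0 (by linarith)))
    apply Real.sqrt_le_sqrt; nlinarith

lemma stmt15_q_val : ∫ s in Set.Ioo (0:ℝ) 1, 1 / Real.sqrt (1 - s ^ 2) = π / 2 := by
  have hint : IntervalIntegrable (fun s : ℝ => 1 / Real.sqrt (1 - s ^ 2)) volume 0 1 := by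
    rw [intervalIntegrable_iff_integrableOn_Ioc_of_le zero_le_one]
    exact stmt15_q_int.congr_set_ae Ioo_ae_eq_Ioc.symm
  have hderiv : ∀ s ∈ Set.Ioo (0:ℝ) 1,
      HasDerivAt Real.arcsin (1 / Real.sqrt (1 - s ^ 2)) s := fun s hs =>
    Real.hasDerivAt_arcsin (by intro h; rw [h] at hs; exact absurd hs.1 (by norm_num))
      (ne_of_lt hs.2)
  have h0 : Filter.Tendsto Real.arcsin (nhdsWithin 0 (Set.Ioi 0)) (nhds 0) := by
    have := Real.continuous_arcsin.tendsto 0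
    rw [Real.arcsin_zero] at this
    exact this.mono_left nhdsWithin_le_nhds
  have h1 : Filter.Tendsto Real.arcsin (nhdsWithin 1 (Set.Iio 1)) (nhds (π/2)) := by
    have := Real.continuous_arcsin.tendsto 1
    rw [Real.arcsin_one] at this
    exact this.mono_left nhdsWithin_le_nhds
  have key := intervalIntegral.integral_eq_sub_of_hasDerivAt_of_tendsto zero_lt_one hderiv hint h0 h1
  rw [intervalIntegral.integral_of_le zero_le_one, integral_Ioc_eq_integral_Ioo] at key
  rw [key]; ring

lemma stmt15_inv_cont {f : ℝ → ℝ} {S : Set ℝ} (hmono : StrictMonoOn f S)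
    {x : ℝ → ℝ} (hxS : ∀ P < (0:ℝ), x P ∈ S) (hfeq : ∀ P < (0:ℝ), f (x P) = -2 * P)
    {P₀ : ℝ} (hP₀ : P₀ < 0) {ε₀ : ℝ} (hε₀ : 0 < ε₀)
    (hball : Set.Icc (x P₀ - ε₀) (x P₀ + ε₀) ⊆ S) :
    ContinuousAt x P₀ := by
  rw [Metric.continuousAt_iff]
  intro ε hε
  set ε' := min (ε/2) ε₀ with hε'def
  have hε' : 0 < ε' := lt_min (by linarith) hε₀
  have hε'ε : ε' < ε := lt_of_le_of_lt (min_le_left _ _) (by linarith)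
  have hε'ε₀ : ε' ≤ ε₀ := min_le_right _ _
  set a := x P₀ - ε' with ha
  set b := x P₀ + ε' with hb
  have haS : a ∈ S := hball ⟨by simp [ha]; linarith, by simp [ha]; linarith⟩
  have hbS : b ∈ S := hball ⟨by simp [hb]; linarith, by simp [hb]; linarith⟩
  have hx0S : x P₀ ∈ S := hxS P₀ hP₀
  have hfa : f a < -2 * P₀ := by
    rw [← hfeq P₀ hP₀]; exact hmono haS hx0S (by simp [ha]; linarith)
  have hfb : -2 * P₀ < f b := by
    rw [← hfeq P₀ hP₀]; exact hmono hx0S hbS (by simp [hb]; linarith)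
  refine ⟨min (min ((f b + 2 * P₀)/2) ((-2 * P₀ - f a)/2)) (-P₀),
    lt_min (lt_min (by linarith) (by linarith)) (by linarith), ?_⟩
  intro P hP
  rw [Real.dist_eq] at hP ⊢
  have h1 : |P - P₀| < (f b + 2 * P₀)/2 := lt_of_lt_of_le hP (le_trans (min_le_left _ _) (min_le_left _ _))
  have h2 : |P - P₀| < (-2 * P₀ - f a)/2 := lt_of_lt_of_le hP (le_trans (min_le_left _ _) (min_le_right _ _))
  have h3 : |P - P₀| < -P₀ := lt_of_lt_of_le hP (min_le_right _ _)
  rw [abs_lt] at h1 h2 h3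
  have hPneg : P < 0 := by linarith [h3.2]
  have hfxP := hfeq P hPneg
  have hxPS := hxS P hPneg
  have hlt1 : f a < f (x P) := by rw [hfxP]; linarith
  have hlt2 : f (x P) < f b := by rw [hfxP]; linarith
  have hA : a < x P := (hmono.lt_iff_lt haS hxPS).1 hlt1
  have hB : x P < b := (hmono.lt_iff_lt hxPS hbS).1 hlt2
  rw [abs_lt]; constructor <;> [skip; skip] <;> simp [ha, hb] at hA hB ⊢ <;> linarith

noncomputable def stmt15G (lam c : ℝ) : ℝ :=
  ∫ s in Set.Ioo (0:ℝ) 1, 2 / Real.sqrt (lam ^ 2 * (1 - s ^ 2) + c * (1 - s ^ (2 - 2 / lam)))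

lemma stmt15_al_pos {lam : ℝ} (hlam : 1 < lam) : 0 < 2 - 2 / lam := by
  have h0 : 0 < lam := by linarith
  have : 2 / lam < 2 := by rw [div_lt_iff₀ h0]; nlinarith
  linarith

lemma stmt15_al_lt_one {lam : ℝ} (hlam : 1 < lam) (hlam2 : lam < 2) : 2 - 2 / lam < 1 := by
  have h0 : 0 < lam := by linarith
  have : 1 < 2 / lam := by rw [lt_div_iff₀ h0]; nlinarith
  linarith

lemma stmt15_s_facts {lam : ℝ} (hlam : 1 < lam) (hlam2 : lam < 2) {s : ℝ}
    (hs : s ∈ Set.Ioo (0:ℝ) 1) :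
    s ≤ s ^ (2 - 2/lam) ∧ s ^ (2 - 2/lam) ≤ 1 ∧ (2 - 2/lam) * (1 - s) ≤ 1 - s ^ (2 - 2/lam) := by
  obtain ⟨h0, h1⟩ := hs
  have hal0 := stmt15_al_pos hlam
  have hal1 := stmt15_al_lt_one hlam hlam2
  refine ⟨?_, Real.rpow_le_one h0.le h1.le hal0.le, ?_⟩
  · have := Real.rpow_le_rpow_of_exponent_ge h0 h1.le (le_of_lt hal1)
    rwa [Real.rpow_one] at this
  · have hg := Real.geom_mean_le_arith_mean2_weighted (le_of_lt hal0)
      (by linarith : (0:ℝ) ≤ 1 - (2 - 2/lam)) h0.le zero_le_one (by ring)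
    rw [Real.one_rpow, mul_one] at hg
    linarith

lemma stmt15_D_lb {lam : ℝ} (hlam : 1 < lam) (hlam2 : lam < 2) {c : ℝ} (hc : -lam ^ 2 ≤ c)
    {s : ℝ} (hs : s ∈ Set.Ioo (0:ℝ) 1) :
    lam ^ 2 * (s * (1 - s)) ≤ lam ^ 2 * (1 - s ^ 2) + c * (1 - s ^ (2 - 2/lam)) := by
  obtain ⟨hf1, hf2, _⟩ := stmt15_s_facts hlam hlam2 hs
  obtain ⟨h0, h1⟩ := hs
  have h2 : (0:ℝ) ≤ 1 - s ^ (2 - 2/lam) := by linarith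
  rcases le_total 0 c with hc0 | hc0
  · nlinarith [mul_nonneg hc0 h2]
  · nlinarith [mul_nonneg (neg_nonneg.2 hc0) h2]

lemma stmt15_D_pos {lam : ℝ} (hlam : 1 < lam) (hlam2 : lam < 2) {c : ℝ} (hc : -lam ^ 2 ≤ c)
    {s : ℝ} (hs : s ∈ Set.Ioo (0:ℝ) 1) :
    0 < lam ^ 2 * (1 - s ^ 2) + c * (1 - s ^ (2 - 2/lam)) := by
  have h := stmt15_D_lb hlam hlam2 hc hs
  have h1 : 0 < lam ^ 2 * (s * (1 - s)) :=
    mul_pos (pow_pos (by linarith) 2) (mul_pos hs.1 (by linarith [hs.2]))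
  linarith

lemma stmt15_meas {lam : ℝ} (hlam : 1 < lam) (hlam2 : lam < 2) {c : ℝ} (hc : -lam ^ 2 ≤ c) :
    AEStronglyMeasurable
      (fun s : ℝ => 2 / Real.sqrt (lam ^ 2 * (1 - s ^ 2) + c * (1 - s ^ (2 - 2/lam))))
      (volume.restrict (Set.Ioo 0 1)) := by
  refine ContinuousOn.aestronglyMeasurable ?_ measurableSet_Ioo
  intro s hs
  have hpos := stmt15_D_pos hlam hlam2 hc hs
  have hden : ContinuousAt (fun t : ℝ => Real.sqrt (lam ^ 2 * (1 - t ^ 2)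
      + c * (1 - t ^ (2 - 2/lam)))) s := by
    apply Real.continuous_sqrt.continuousAt.comp
    apply ContinuousAt.add (by fun_prop)
    apply ContinuousAt.mul continuousAt_const
    exact ContinuousAt.sub continuousAt_const
      (Real.continuousAt_rpow_const s _ (Or.inl hs.1.ne'))
  exact (ContinuousAt.div continuousAt_const hden (Real.sqrt_pos.2 hpos).ne').continuousWithinAt

lemma stmt15_bound {lam : ℝ} (hlam : 1 < lam) (hlam2 : lam < 2) {c : ℝ} (hc : -lam ^ 2 ≤ c)
    {s : ℝ} (hs : s ∈ Set.Ioo (0:ℝ) 1) :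
    2 / Real.sqrt (lam ^ 2 * (1 - s ^ 2) + c * (1 - s ^ (2 - 2/lam)))
      ≤ (2 / lam) * (1 / Real.sqrt (s * (1 - s))) := by
  have hlb := stmt15_D_lb hlam hlam2 hc hs
  have hw : 0 < s * (1 - s) := mul_pos hs.1 (by linarith [hs.2])
  have hl0 : (0:ℝ) < lam := by linarith
  have h1 : Real.sqrt (lam ^ 2 * (s * (1 - s)))
      ≤ Real.sqrt (lam ^ 2 * (1 - s ^ 2) + c * (1 - s ^ (2 - 2/lam))) := Real.sqrt_le_sqrt hlb
  have h2 : 0 < Real.sqrt (lam ^ 2 * (s * (1 - s))) :=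
    Real.sqrt_pos.2 (mul_pos (pow_pos hl0 2) hw)
  calc 2 / Real.sqrt (lam ^ 2 * (1 - s ^ 2) + c * (1 - s ^ (2 - 2/lam)))
      ≤ 2 / Real.sqrt (lam ^ 2 * (s * (1 - s))) := by
        apply div_le_div_of_nonneg_left (by norm_num) h2 h1
    _ = (2 / lam) * (1 / Real.sqrt (s * (1 - s))) := by
        rw [Real.sqrt_mul (by positivity), Real.sqrt_sq hl0.le]
        rw [div_mul_eq_div_div]
        ring

lemma stmt15_integrable {lam : ℝ} (hlam : 1 < lam) (hlam2 : lam < 2) {c : ℝ}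
    (hc : -lam ^ 2 ≤ c) :
    IntegrableOn
      (fun s : ℝ => 2 / Real.sqrt (lam ^ 2 * (1 - s ^ 2) + c * (1 - s ^ (2 - 2/lam))))
      (Set.Ioo 0 1) := by
  refine (stmt15_w_int.const_mul (2/lam)).mono' (stmt15_meas hlam hlam2 hc) ?_
  filter_upwards [ae_restrict_mem measurableSet_Ioo] with s hs
  have hpos := stmt15_D_pos hlam hlam2 hc hs
  rw [Real.norm_eq_abs, abs_of_nonneg (by positivity)]
  exact stmt15_bound hlam hlam2 hc hs

lemma stmt15_G_le {lam : ℝ} (hlam : 1 < lam) (hlam2 : lam < 2) {c : ℝ} (hc : -lam ^ 2 ≤ c) :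
    stmt15G lam c ≤ 2 * π / lam := by
  have h := integral_mono_of_nonneg (μ := volume.restrict (Set.Ioo (0:ℝ) 1))
    (f := fun s : ℝ => 2 / Real.sqrt (lam ^ 2 * (1 - s ^ 2) + c * (1 - s ^ (2 - 2/lam))))
    (g := fun s : ℝ => (2 / lam) * (1 / Real.sqrt (s * (1 - s)))) ?_
    (stmt15_w_int.const_mul (2/lam)) ?_
  · rw [stmt15G]
    calc (∫ s in Set.Ioo (0:ℝ) 1,
        2 / Real.sqrt (lam ^ 2 * (1 - s ^ 2) + c * (1 - s ^ (2 - 2/lam))))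
        ≤ ∫ s in Set.Ioo (0:ℝ) 1, (2 / lam) * (1 / Real.sqrt (s * (1 - s))) := h
      _ = (2 / lam) * ∫ s in Set.Ioo (0:ℝ) 1, 1 / Real.sqrt (s * (1 - s)) :=
          integral_const_mul _ _
      _ = 2 * π / lam := by rw [stmt15_w_val]; ring
  · filter_upwards [ae_restrict_mem measurableSet_Ioo] with s hs
    have hpos := stmt15_D_pos hlam hlam2 hc hs
    positivity
  · filter_upwards [ae_restrict_mem measurableSet_Ioo] with s hs
    exact stmt15_bound hlam hlam2 hc hs

lemma stmt15_G_ge {lam : ℝ} (hlam : 1 < lam) (hlam2 : lam < 2) {c : ℝ} (hc : -lam ^ 2 ≤ c) :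
    π / Real.sqrt (lam ^ 2 + max c 0) ≤ stmt15G lam c := by
  have hM : (0:ℝ) ≤ max c 0 := le_max_right _ _
  have hl0 : (0:ℝ) < lam := by linarith
  have hMpos : (0:ℝ) < lam ^ 2 + max c 0 := by positivity
  have key : ∀ s ∈ Set.Ioo (0:ℝ) 1,
      (2 / Real.sqrt (lam ^ 2 + max c 0)) * (1 / Real.sqrt (1 - s ^ 2))
        ≤ 2 / Real.sqrt (lam ^ 2 * (1 - s ^ 2) + c * (1 - s ^ (2 - 2/lam))) := by
    intro s hs
    obtain ⟨hf1, hf2, _⟩ := stmt15_s_facts hlam hlam2 hs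
    obtain ⟨h0, h1⟩ := hs
    have hs2 : (0:ℝ) < 1 - s ^ 2 := by nlinarith
    have hub : lam ^ 2 * (1 - s ^ 2) + c * (1 - s ^ (2 - 2/lam))
        ≤ (lam ^ 2 + max c 0) * (1 - s ^ 2) := by
      rcases le_total c 0 with hc0 | hc0
      · have : c * (1 - s ^ (2 - 2/lam)) ≤ 0 := mul_nonpos_of_nonpos_of_nonneg hc0 (by linarith)
        nlinarith
      · rw [max_eq_left hc0]
        have h3 : s ^ 2 ≤ s ^ (2 - 2/lam) := by nlinarith
        nlinarith
    have hpos := stmt15_D_pos hlam hlam2 hc ⟨h0, h1⟩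
    have h4 : Real.sqrt (lam ^ 2 * (1 - s ^ 2) + c * (1 - s ^ (2 - 2/lam)))
        ≤ Real.sqrt ((lam ^ 2 + max c 0) * (1 - s ^ 2)) := Real.sqrt_le_sqrt hub
    have h5 : 0 < Real.sqrt (lam ^ 2 * (1 - s ^ 2) + c * (1 - s ^ (2 - 2/lam))) :=
      Real.sqrt_pos.2 hpos
    calc (2 / Real.sqrt (lam ^ 2 + max c 0)) * (1 / Real.sqrt (1 - s ^ 2))
        = 2 / Real.sqrt ((lam ^ 2 + max c 0) * (1 - s ^ 2)) := by
          rw [Real.sqrt_mul hMpos.le]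
          rw [div_mul_eq_div_div]
          ring
      _ ≤ 2 / Real.sqrt (lam ^ 2 * (1 - s ^ 2) + c * (1 - s ^ (2 - 2/lam))) :=
          div_le_div_of_nonneg_left (by norm_num) h5 h4
  have h := integral_mono_of_nonneg (μ := volume.restrict (Set.Ioo (0:ℝ) 1))
    (f := fun s : ℝ => (2 / Real.sqrt (lam ^ 2 + max c 0)) * (1 / Real.sqrt (1 - s ^ 2)))
    (g := fun s : ℝ => 2 / Real.sqrt (lam ^ 2 * (1 - s ^ 2) + c * (1 - s ^ (2 - 2/lam)))) ?_
    (stmt15_integrable hlam hlam2 hc) ?_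
  · rw [stmt15G]
    have heq : (∫ s in Set.Ioo (0:ℝ) 1,
        (2 / Real.sqrt (lam ^ 2 + max c 0)) * (1 / Real.sqrt (1 - s ^ 2)))
        = (2 / Real.sqrt (lam ^ 2 + max c 0)) * (π / 2) := by
      rw [integral_const_mul, stmt15_q_val]
    rw [heq] at h
    have : (2 / Real.sqrt (lam ^ 2 + max c 0)) * (π / 2) = π / Real.sqrt (lam ^ 2 + max c 0) := by
      ring
    linarith [h, this.symm.le]
  · filter_upwards [ae_restrict_mem measurableSet_Ioo] with s hs
    have : (0:ℝ) < 1 - s ^ 2 := by nlinarith [hs.1, hs.2]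
    positivity
  · filter_upwards [ae_restrict_mem measurableSet_Ioo] with s hs
    exact key s hs

lemma stmt15_G_le' {lam : ℝ} (hlam : 1 < lam) (hlam2 : lam < 2) {c : ℝ} (hc : 0 < c) :
    stmt15G lam c ≤ 2 * π / Real.sqrt (c * (2 - 2/lam)) := by
  have hal0 := stmt15_al_pos hlam
  have hcal : 0 < c * (2 - 2/lam) := mul_pos hc hal0
  have key : ∀ s ∈ Set.Ioo (0:ℝ) 1,
      2 / Real.sqrt (lam ^ 2 * (1 - s ^ 2) + c * (1 - s ^ (2 - 2/lam)))
        ≤ (2 / Real.sqrt (c * (2 - 2/lam))) * (1 / Real.sqrt (s * (1 - s))) := by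
    intro s hs
    obtain ⟨hf1, hf2, hf3⟩ := stmt15_s_facts hlam hlam2 hs
    obtain ⟨h0, h1⟩ := hs
    have hs2 : (0:ℝ) < 1 - s ^ 2 := by nlinarith
    have hw : 0 < s * (1 - s) := mul_pos h0 (by linarith)
    have hlb : c * (2 - 2/lam) * (s * (1 - s))
        ≤ lam ^ 2 * (1 - s ^ 2) + c * (1 - s ^ (2 - 2/lam)) := by
      have h3 : (2 - 2/lam) * (s * (1 - s)) ≤ (2 - 2/lam) * (1 - s) :=
        mul_le_mul_of_nonneg_left (by nlinarith) hal0.le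
      have h4 : c * ((2 - 2/lam) * (1 - s)) ≤ c * (1 - s ^ (2 - 2/lam)) :=
        mul_le_mul_of_nonneg_left hf3 hc.le
      nlinarith
    have h5 : 0 < Real.sqrt (c * (2 - 2/lam) * (s * (1 - s))) :=
      Real.sqrt_pos.2 (mul_pos hcal hw)
    calc 2 / Real.sqrt (lam ^ 2 * (1 - s ^ 2) + c * (1 - s ^ (2 - 2/lam)))
        ≤ 2 / Real.sqrt (c * (2 - 2/lam) * (s * (1 - s))) :=
          div_le_div_of_nonneg_left (by norm_num) h5 (Real.sqrt_le_sqrt hlb)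
      _ = (2 / Real.sqrt (c * (2 - 2/lam))) * (1 / Real.sqrt (s * (1 - s))) := by
          rw [Real.sqrt_mul hcal.le, div_mul_eq_div_div]
          ring
  have h := integral_mono_of_nonneg (μ := volume.restrict (Set.Ioo (0:ℝ) 1))
    (f := fun s : ℝ => 2 / Real.sqrt (lam ^ 2 * (1 - s ^ 2) + c * (1 - s ^ (2 - 2/lam))))
    (g := fun s : ℝ => (2 / Real.sqrt (c * (2 - 2/lam))) * (1 / Real.sqrt (s * (1 - s)))) ?_
    (stmt15_w_int.const_mul _) ?_
  · rw [stmt15G]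
    calc (∫ s in Set.Ioo (0:ℝ) 1,
        2 / Real.sqrt (lam ^ 2 * (1 - s ^ 2) + c * (1 - s ^ (2 - 2/lam))))
        ≤ ∫ s in Set.Ioo (0:ℝ) 1,
            (2 / Real.sqrt (c * (2 - 2/lam))) * (1 / Real.sqrt (s * (1 - s))) := h
      _ = (2 / Real.sqrt (c * (2 - 2/lam))) * π := by rw [integral_const_mul, stmt15_w_val]
      _ = 2 * π / Real.sqrt (c * (2 - 2/lam)) := by ring
  · filter_upwards [ae_restrict_mem measurableSet_Ioo] with s hs
    have hpos := stmt15_D_pos hlam hlam2 (by nlinarith [sq_nonneg lam] : -lam ^ 2 ≤ c) hs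
    positivity
  · filter_upwards [ae_restrict_mem measurableSet_Ioo] with s hs
    exact key s hs

lemma stmt15_G_cont {lam : ℝ} (hlam : 1 < lam) (hlam2 : lam < 2) {c₀ : ℝ} (hc : -lam ^ 2 < c₀) :
    ContinuousAt (stmt15G lam) c₀ := by
  have : stmt15G lam = fun c => ∫ s in Set.Ioo (0:ℝ) 1,
      2 / Real.sqrt (lam ^ 2 * (1 - s ^ 2) + c * (1 - s ^ (2 - 2/lam))) := rfl
  rw [this]
  apply MeasureTheory.continuousAt_of_dominated (bound := fun s => (2/lam) * (1 / Real.sqrt (s * (1 - s))))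
  · filter_upwards [Ioi_mem_nhds hc] with c hc'
    exact stmt15_meas hlam hlam2 (le_of_lt hc')
  · filter_upwards [Ioi_mem_nhds hc] with c hc'
    filter_upwards [ae_restrict_mem measurableSet_Ioo] with s hs
    have hpos := stmt15_D_pos hlam hlam2 (le_of_lt hc') hs
    rw [Real.norm_eq_abs, abs_of_nonneg (by positivity)]
    exact stmt15_bound hlam hlam2 (le_of_lt hc') hs
  · exact stmt15_w_int.const_mul _
  · filter_upwards [ae_restrict_mem measurableSet_Ioo] with s hs
    have hpos := stmt15_D_pos hlam hlam2 (le_of_lt hc) hs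
    have hden : ContinuousAt (fun c : ℝ => Real.sqrt (lam ^ 2 * (1 - s ^ 2)
        + c * (1 - s ^ (2 - 2/lam)))) c₀ :=
      Real.continuous_sqrt.continuousAt.comp (by fun_prop)
    exact ContinuousAt.div continuousAt_const hden (Real.sqrt_pos.2 hpos).ne'

lemma stmt15_Fm_mono {lam : ℝ} (hlam : 1 < lam) :
    StrictMonoOn (fun x : ℝ => lam ^ 2 * x ^ 2 + x ^ (2 - 2/lam)) (Set.Ici 0) := by
  intro x hx y hy hxy
  simp only
  have h1 : x ^ (2 - 2/lam) < y ^ (2 - 2/lam) :=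
    Real.rpow_lt_rpow hx hxy (stmt15_al_pos hlam)
  have h2 : x ^ 2 < y ^ 2 := by nlinarith [Set.mem_Ici.1 hx]
  nlinarith [sq_nonneg lam, pow_pos (show (0:ℝ) < lam by linarith) 2]

lemma stmt15_x0_pow {lam : ℝ} (hlam : 1 < lam) :
    (((lam ^ 2)⁻¹ : ℝ) ^ (lam / 2 : ℝ)) ^ (2 / lam : ℝ) = (lam ^ 2)⁻¹ := by
  have hl0 : (0:ℝ) < lam := by linarith
  rw [← Real.rpow_mul (by positivity), show lam / 2 * (2 / lam) = 1 by field_simp, Real.rpow_one]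

lemma stmt15_Fp_mono {lam : ℝ} (hlam : 1 < lam) (hlam2 : lam < 2) :
    StrictMonoOn (fun x : ℝ => lam ^ 2 * x ^ 2 - x ^ (2 - 2/lam))
      (Set.Ici (((lam ^ 2)⁻¹ : ℝ) ^ (lam / 2 : ℝ))) := by
  set x0 : ℝ := ((lam ^ 2)⁻¹ : ℝ) ^ (lam / 2 : ℝ) with hx0def
  have hl0 : (0:ℝ) < lam := by linarith
  have hx0pos : 0 < x0 := Real.rpow_pos_of_pos (by positivity) _
  have hal0 := stmt15_al_pos hlam
  have hal1 := stmt15_al_lt_one hlam hlam2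
  apply strictMonoOn_of_deriv_pos (convex_Ici _)
  · apply ContinuousOn.sub (by fun_prop)
    intro x hx
    have hx' : (0:ℝ) < x := lt_of_lt_of_le hx0pos hx
    exact (Real.continuousAt_rpow_const x _ (Or.inl hx'.ne')).continuousWithinAt
  · intro x hx
    rw [interior_Ici] at hx
    have hx0lt : x0 < x := hx
    have hxpos : 0 < x := hx0pos.trans hx0lt
    have hd : HasDerivAt (fun y : ℝ => lam ^ 2 * y ^ 2 - y ^ (2 - 2/lam))
        (lam ^ 2 * (2 * x) - (2 - 2/lam) * x ^ (2 - 2/lam - 1)) x := by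
      have h1 : HasDerivAt (fun y : ℝ => y ^ 2) (2 * x) x := by simpa using hasDerivAt_pow 2 x
      exact (h1.const_mul (lam ^ 2)).sub (Real.hasDerivAt_rpow_const (Or.inl hxpos.ne'))
    rw [hd.deriv]
    have ht : 0 < x ^ (2 - 2/lam - 1) := Real.rpow_pos_of_pos hxpos _
    have ha1 : x ^ (2 - 2/lam - 1) * x = x ^ (2 - 2/lam) := by
      rw [← Real.rpow_add_one hxpos.ne']; ring_nf
    have ha2 : x ^ (2 - 2/lam) * x ^ (2 / lam : ℝ) = x ^ 2 := by
      rw [← Real.rpow_add hxpos, show (2 - 2/lam) + 2/lam = ((2:ℕ):ℝ) by push_cast; ring,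
        Real.rpow_natCast]
    have ha3 : (lam ^ 2)⁻¹ < x ^ (2 / lam : ℝ) := by
      have h := Real.rpow_lt_rpow hx0pos.le hx0lt (by positivity : (0:ℝ) < 2 / lam)
      rwa [stmt15_x0_pow hlam] at h
    have hmul : 1 < lam ^ 2 * x ^ (2 / lam : ℝ) := by
      have h := mul_lt_mul_of_pos_left ha3 (pow_pos hl0 2)
      rwa [mul_inv_cancel₀ (by positivity)] at h
    have key1 : x ^ (2 - 2/lam) < lam ^ 2 * x ^ 2 := by
      have h := mul_lt_mul_of_pos_left hmul (Real.rpow_pos_of_pos hxpos (2 - 2/lam))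
      rw [mul_one] at h
      nlinarith [ha2]
    have key2 : x ^ (2 - 2/lam - 1) < lam ^ 2 * x := by
      rw [← ha1] at key1
      have hxx : lam ^ 2 * x ^ 2 = lam ^ 2 * x * x := by ring
      rw [hxx] at key1
      exact lt_of_mul_lt_mul_right key1 hxpos.le
    nlinarith [mul_lt_mul_of_pos_right hal1 ht, mul_pos (pow_pos hl0 2) hxpos]

lemma stmt15_Fp_nonpos {lam : ℝ} (hlam : 1 < lam) (hlam2 : lam < 2) {x : ℝ} (hx : 0 < x)
    (hxle : x ≤ ((lam ^ 2)⁻¹ : ℝ) ^ (lam / 2 : ℝ)) :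
    lam ^ 2 * x ^ 2 - x ^ (2 - 2/lam) ≤ 0 := by
  have hl0 : (0:ℝ) < lam := by linarith
  have h1 : x ^ (2 / lam : ℝ) ≤ (lam ^ 2)⁻¹ := by
    have h := Real.rpow_le_rpow hx.le hxle (by positivity : (0:ℝ) ≤ 2 / lam)
    rwa [stmt15_x0_pow hlam] at h
  have ha2 : x ^ (2 - 2/lam) * x ^ (2 / lam : ℝ) = x ^ 2 := by
    rw [← Real.rpow_add hx, show (2 - 2/lam) + 2/lam = ((2:ℕ):ℝ) by push_cast; ring,
      Real.rpow_natCast]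
  have hmul : lam ^ 2 * x ^ (2 / lam : ℝ) ≤ 1 := by
    have h := mul_le_mul_of_nonneg_left h1 (le_of_lt (pow_pos hl0 2))
    rwa [mul_inv_cancel₀ (by positivity)] at h
  have h := mul_le_mul_of_nonneg_left hmul (le_of_lt (Real.rpow_pos_of_pos hx (2 - 2/lam)))
  rw [mul_one] at h
  nlinarith [ha2]
/-- For λ ∈ (1,2) and each integer k ≥ 2, there exists P < 0 with
`T₊(P) + (2k-1) T₋(P) = 2π`. -/
theorem stmt_15 (lam : ℝ) (hlam : 1 < lam) (hlam2 : lam < 2)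
    (xp xm Tp Tm : ℝ → ℝ)
    (hxp : ∀ P < (0 : ℝ), 0 < xp P ∧
      lam ^ 2 * (xp P) ^ 2 - (xp P) ^ (2 - 2 / lam) = -2 * P)
    (hxm : ∀ P < (0 : ℝ), 0 < xm P ∧
      lam ^ 2 * (xm P) ^ 2 + (xm P) ^ (2 - 2 / lam) = -2 * P)
    (hTp : ∀ P < (0 : ℝ), Tp P = ∫ s in Set.Ioo (0:ℝ) 1,
      2 / Real.sqrt (lam ^ 2 * (1 - s ^ 2)
        - (xp P) ^ (-2 / lam) * (1 - s ^ (2 - 2 / lam))))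
    (hTm : ∀ P < (0 : ℝ), Tm P = ∫ s in Set.Ioo (0:ℝ) 1,
      2 / Real.sqrt (lam ^ 2 * (1 - s ^ 2)
        + (xm P) ^ (-2 / lam) * (1 - s ^ (2 - 2 / lam))))
    (k : ℕ) (hk : 2 ≤ k) :
    ∃ P < (0 : ℝ), Tp P + (2 * (k : ℝ) - 1) * Tm P = 2 * π := by
  have hl0 : (0:ℝ) < lam := by linarith
  have hal0 := stmt15_al_pos hlam
  have hal1 := stmt15_al_lt_one hlam hlam2
  have hx0pos : (0:ℝ) < ((lam ^ 2)⁻¹ : ℝ) ^ (lam / 2 : ℝ) :=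
    Real.rpow_pos_of_pos (by positivity) _
  -- basic facts about xp
  have hxp_gt : ∀ P < (0:ℝ), ((lam ^ 2)⁻¹ : ℝ) ^ (lam / 2 : ℝ) < xp P := by
    intro P hP
    by_contra h
    push_neg at h
    have h2 := stmt15_Fp_nonpos hlam hlam2 (hxp P hP).1 h
    rw [(hxp P hP).2] at h2
    linarith
  have hap : ∀ P < (0:ℝ), 0 < xp P ^ (-2 / lam) ∧ xp P ^ (-2 / lam) < lam ^ 2 := by
    intro P hP
    have hx := (hxp P hP).1
    refine ⟨Real.rpow_pos_of_pos hx _, ?_⟩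
    have heq := (hxp P hP).2
    have hmulid : xp P ^ (-2 / lam) * (xp P) ^ 2 = (xp P) ^ (2 - 2 / lam) := by
      rw [← Real.rpow_natCast (xp P) 2, ← Real.rpow_add hx]
      congr 1
      push_cast
      ring
    rw [← hmulid] at heq
    have hxp2 : 0 < (xp P) ^ 2 := pow_pos hx 2
    by_contra hcon
    push_neg at hcon
    nlinarith [mul_le_mul_of_nonneg_right hcon hxp2.le]
  -- rewriting Tp, Tm through G
  have hTpG : ∀ P < (0:ℝ), Tp P = stmt15G lam (-(xp P ^ (-2 / lam))) := by
    intro P hP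
    rw [hTp P hP, stmt15G]
    congr 1
    funext s
    rw [neg_mul, ← sub_eq_add_neg]
  have hTmG : ∀ P < (0:ℝ), Tm P = stmt15G lam (xm P ^ (-2 / lam)) := by
    intro P hP
    rw [hTm P hP, stmt15G]
  -- continuity of xm, xp
  have hxmc : ∀ P₀ < (0:ℝ), ContinuousAt xm P₀ := by
    intro P₀ hP₀
    refine stmt15_inv_cont (stmt15_Fm_mono hlam) (fun P hP => (hxm P hP).1.le)
      (fun P hP => (hxm P hP).2) hP₀ (hxm P₀ hP₀).1 ?_
    intro y hy
    have := hy.1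
    simp only [Set.mem_Ici]
    linarith
  have hxpc : ∀ P₀ < (0:ℝ), ContinuousAt xp P₀ := by
    intro P₀ hP₀
    refine stmt15_inv_cont (stmt15_Fp_mono hlam hlam2) (fun P hP => (hxp_gt P hP).le)
      (fun P hP => (hxp P hP).2) hP₀ (show 0 < xp P₀ - ((lam ^ 2)⁻¹ : ℝ) ^ (lam / 2 : ℝ) by
        linarith [hxp_gt P₀ hP₀]) ?_
    intro y hy
    have := hy.1
    simp only [Set.mem_Ici]
    linarith
  -- continuity of Tp, Tm
  have hTpc : ∀ P₀ < (0:ℝ), ContinuousAt Tp P₀ := by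
    intro P₀ hP₀
    have hinner : ContinuousAt (fun P => -(xp P ^ (-2 / lam))) P₀ :=
      (ContinuousAt.rpow_const (hxpc P₀ hP₀) (Or.inl (hxp P₀ hP₀).1.ne')).neg
    have hG : ContinuousAt (stmt15G lam) (-(xp P₀ ^ (-2 / lam))) :=
      stmt15_G_cont hlam hlam2 (by linarith [(hap P₀ hP₀).2])
    have hcomp : ContinuousAt (fun P => stmt15G lam (-(xp P ^ (-2 / lam)))) P₀ :=
      Filter.Tendsto.comp (g := stmt15G lam) hG hinner
    apply hcomp.congr
    filter_upwards [Iio_mem_nhds hP₀] with P hP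
    exact (hTpG P hP).symm
  have hTmc : ∀ P₀ < (0:ℝ), ContinuousAt Tm P₀ := by
    intro P₀ hP₀
    have hinner : ContinuousAt (fun P => xm P ^ (-2 / lam)) P₀ :=
      ContinuousAt.rpow_const (hxmc P₀ hP₀) (Or.inl (hxm P₀ hP₀).1.ne')
    have hbm : (0:ℝ) < xm P₀ ^ (-2 / lam) := Real.rpow_pos_of_pos (hxm P₀ hP₀).1 _
    have hG : ContinuousAt (stmt15G lam) (xm P₀ ^ (-2 / lam)) :=
      stmt15_G_cont hlam hlam2 (by nlinarith [sq_nonneg lam])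
    have hcomp : ContinuousAt (fun P => stmt15G lam (xm P ^ (-2 / lam))) P₀ :=
      Filter.Tendsto.comp (g := stmt15G lam) hG hinner
    apply hcomp.congr
    filter_upwards [Iio_mem_nhds hP₀] with P hP
    exact (hTmG P hP).symm
  -- pinning the value of xm ^ (-2/lam)
  have hpin : ∀ c : ℝ, 0 < c → ∃ P < (0:ℝ), xm P ^ (-2 / lam) = c := by
    intro c hc
    set t := c ^ (-(lam / 2) : ℝ) with ht
    have htpos : 0 < t := Real.rpow_pos_of_pos hc _
    have htFpos : 0 < lam ^ 2 * t ^ 2 + t ^ (2 - 2 / lam) :=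
      add_pos (by positivity) (Real.rpow_pos_of_pos htpos _)
    refine ⟨-(lam ^ 2 * t ^ 2 + t ^ (2 - 2 / lam)) / 2, by linarith, ?_⟩
    set P := -(lam ^ 2 * t ^ 2 + t ^ (2 - 2 / lam)) / 2 with hPdef
    have hP : P < 0 := by rw [hPdef]; linarith
    have heqP : lam ^ 2 * t ^ 2 + t ^ (2 - 2 / lam) = -2 * P := by rw [hPdef]; ring
    have hxmP := hxm P hP
    have huniq : xm P = t := by
      apply (stmt15_Fm_mono hlam).injOn (Set.mem_Ici.2 hxmP.1.le) (Set.mem_Ici.2 htpos.le)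
      show lam ^ 2 * (xm P) ^ 2 + (xm P) ^ (2 - 2 / lam)
        = lam ^ 2 * t ^ 2 + t ^ (2 - 2 / lam)
      rw [hxmP.2, heqP]
    rw [huniq, ht, ← Real.rpow_mul hc.le, show -(lam / 2) * (-2 / lam) = 1 by field_simp,
      Real.rpow_one]
  -- the constant K
  have hK3 : (3:ℝ) ≤ 2 * (k:ℝ) - 1 := by
    have : (2:ℝ) ≤ (k:ℝ) := by exact_mod_cast hk
    linarith
  have hKpos : (0:ℝ) < 2 * (k:ℝ) - 1 := by linarith
  -- lower endpoint P₁
  have hb1 : (0:ℝ) < (4 - lam ^ 2) / 2 := by nlinarith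
  obtain ⟨P₁, hP₁, hb1eq⟩ := hpin ((4 - lam ^ 2) / 2) hb1
  have hTm1 : π / 2 < Tm P₁ := by
    rw [hTmG P₁ hP₁, hb1eq]
    have hge := stmt15_G_ge hlam hlam2 (show -lam ^ 2 ≤ (4 - lam ^ 2) / 2 by nlinarith)
    rw [max_eq_left hb1.le] at hge
    have hpos2 : (0:ℝ) < lam ^ 2 + (4 - lam ^ 2) / 2 := by nlinarith
    have hlt : Real.sqrt (lam ^ 2 + (4 - lam ^ 2) / 2) < 2 :=
      (Real.sqrt_lt' (by norm_num)).2 (by nlinarith)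
    have hs0 : 0 < Real.sqrt (lam ^ 2 + (4 - lam ^ 2) / 2) := Real.sqrt_pos.2 hpos2
    have h5 : π / 2 < π / Real.sqrt (lam ^ 2 + (4 - lam ^ 2) / 2) :=
      div_lt_div_of_pos_left pi_pos hs0 hlt
    linarith
  have hTp1 : π / lam ≤ Tp P₁ := by
    rw [hTpG P₁ hP₁]
    have ha := hap P₁ hP₁
    have hge := stmt15_G_ge hlam hlam2
      (show -lam ^ 2 ≤ -(xp P₁ ^ (-2 / lam)) by linarith [ha.2])
    rw [max_eq_right (by linarith [ha.1] : -(xp P₁ ^ (-2 / lam)) ≤ 0), add_zero,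
      Real.sqrt_sq hl0.le] at hge
    exact hge
  have hg1 : 2 * π < Tp P₁ + (2 * (k:ℝ) - 1) * Tm P₁ := by
    have h1 : π / 2 < π / lam := div_lt_div_of_pos_left pi_pos hl0 hlam2
    have h3 : (2 * (k:ℝ) - 1) * (π / 2) < (2 * (k:ℝ) - 1) * Tm P₁ :=
      mul_lt_mul_of_pos_left hTm1 hKpos
    nlinarith [pi_pos]
  -- upper endpoint P₂
  have ht2 : (0:ℝ) < (2 * (k:ℝ) - 1) * lam / (lam - 1) :=
    div_pos (mul_pos hKpos hl0) (by linarith)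
  set t2 : ℝ := (2 * (k:ℝ) - 1) * lam / (lam - 1) with ht2def
  have hb2 : (0:ℝ) < (t2 ^ 2 + 1) / (2 - 2 / lam) := div_pos (by positivity) hal0
  obtain ⟨P₂, hP₂, hb2eq⟩ := hpin ((t2 ^ 2 + 1) / (2 - 2 / lam)) hb2
  have hb2al : (t2 ^ 2 + 1) / (2 - 2 / lam) * (2 - 2 / lam) = t2 ^ 2 + 1 :=
    div_mul_cancel₀ _ hal0.ne'
  have hTm2 : Tm P₂ < 2 * π * (lam - 1) / ((2 * (k:ℝ) - 1) * lam) := by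
    rw [hTmG P₂ hP₂, hb2eq]
    have hle := stmt15_G_le' hlam hlam2 hb2
    rw [hb2al] at hle
    have h1 : t2 < Real.sqrt (t2 ^ 2 + 1) := by
      nth_rewrite 1 [show t2 = Real.sqrt (t2 ^ 2) by rw [Real.sqrt_sq ht2.le]]
      exact Real.sqrt_lt_sqrt (by positivity) (by linarith)
    have h2 : 2 * π / Real.sqrt (t2 ^ 2 + 1) < 2 * π / t2 :=
      div_lt_div_of_pos_left (by positivity) ht2 h1
    have h3 : 2 * π / t2 = 2 * π * (lam - 1) / ((2 * (k:ℝ) - 1) * lam) := by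
      rw [ht2def, div_div_eq_mul_div]
    linarith
  have hTp2 : Tp P₂ ≤ 2 * π / lam := by
    rw [hTpG P₂ hP₂]
    exact stmt15_G_le hlam hlam2 (by linarith [(hap P₂ hP₂).1, (hap P₂ hP₂).2])
  have hg2 : Tp P₂ + (2 * (k:ℝ) - 1) * Tm P₂ < 2 * π := by
    have h4 : (2 * (k:ℝ) - 1) * Tm P₂
        < (2 * (k:ℝ) - 1) * (2 * π * (lam - 1) / ((2 * (k:ℝ) - 1) * lam)) :=
      mul_lt_mul_of_pos_left hTm2 hKpos
    have h5 : (2 * (k:ℝ) - 1) * (2 * π * (lam - 1) / ((2 * (k:ℝ) - 1) * lam))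
        = 2 * π - 2 * π / lam := by
      field_simp
    linarith
  -- intermediate value theorem
  have hgc : ContinuousOn (fun P => Tp P + (2 * (k:ℝ) - 1) * Tm P) (Set.uIcc P₁ P₂) := by
    intro P hP
    rw [Set.mem_uIcc] at hP
    have hPneg : P < 0 := by rcases hP with ⟨_, h⟩ | ⟨_, h⟩ <;> linarith
    exact ((hTpc P hPneg).add ((hTmc P hPneg).const_mul _)).continuousWithinAt
  have hmem : 2 * π ∈ Set.uIcc ((fun P => Tp P + (2 * (k:ℝ) - 1) * Tm P) P₁)
      ((fun P => Tp P + (2 * (k:ℝ) - 1) * Tm P) P₂) := by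
    rw [Set.mem_uIcc]
    right
    exact ⟨hg2.le, hg1.le⟩
  obtain ⟨P, hPmem, hgP⟩ := intermediate_value_uIcc hgc hmem
  rw [Set.mem_uIcc] at hPmem
  have hPneg : P < 0 := by rcases hPmem with ⟨_, h⟩ | ⟨_, h⟩ <;> linarith
  exact ⟨P, hPneg, hgP⟩
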